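/- The best-response distortion of an agent is continuous in the others' strategies: let D(q, θ) = E[(X_θ - q(X_θ))^2] where the density p_θ of X_θ on (0,1) depends continuously (in total variation) on a parameter θ, is positive and log-concave for each θ. Then θ ↦ min_q D(q, θ), the minimum over M-level regular quantizers, is continuous in θ. -/

import Mathlib

open MeasureTheory Set Filter

lemma chain_mono {a : ℕ → ℝ} {M : ℕ} (h : ∀ k < M, a k < a (k+1)) :
    ∀ i j, i ≤ j → j ≤ M → a i ≤ a j := by
  intro i j hij hjM
  induction j with
  | zero => simp [Nat.le_zero.mp hij]
  | succ n ih =>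
    rcases Nat.eq_or_lt_of_le hij with rfl | h'
    · exact le_rfl
    · exact le_trans (ih (by omega) (by omega)) (le_of_lt (h n (by omega)))

lemma quant_integrable {f : ℝ → ℝ} (hf : IntegrableOn f (Ioo (0:ℝ) 1))
    {α β y : ℝ} (hα : 0 ≤ α) (hβ : β ≤ 1) (hy0 : 0 ≤ y) (hy1 : y ≤ 1) :
    IntegrableOn (fun x => (x - y)^2 * f x) (Ioc α β) := by
  have hsub : Ioo α β ⊆ Ioo (0:ℝ) 1 := fun x hx => ⟨lt_of_le_of_lt hα hx.1, lt_of_lt_of_le hx.2 hβ⟩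
  have hfI : IntegrableOn f (Ioc α β) := by
    rw [integrableOn_Ioc_iff_integrableOn_Ioo]
    exact hf.mono_set hsub
  apply Integrable.bdd_mul (c := 1) hfI
  · exact (Continuous.aestronglyMeasurable (by continuity))
  · rw [ae_restrict_iff' measurableSet_Ioc]
    have h1 : (volume : Measure ℝ) {(1:ℝ)} = 0 := Real.volume_singleton
    filter_upwards [measure_eq_zero_iff_ae_notMem.mp h1] with x hx1 hx
    have hx0 : 0 < x := lt_of_le_of_lt hα hx.1
    have hx1' : x ≤ 1 := le_trans hx.2 hβ
    have : |x - y| ≤ 1 := by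
      rw [abs_le]; constructor <;> nlinarith
    calc ‖(x - y)^2‖ = |x - y|^2 := by rw [Real.norm_eq_abs, abs_pow, sq_abs]
      _ ≤ 1 := by nlinarith [abs_nonneg (x - y)]

lemma key_bound {M : ℕ} {f g : ℝ → ℝ}
    (hf : IntegrableOn f (Ioo (0:ℝ) 1)) (hg : IntegrableOn g (Ioo (0:ℝ) 1))
    {a y : ℕ → ℝ} (ha0 : a 0 = 0) (haM : a M = 1)
    (hmono : ∀ k < M, a k < a (k+1)) (hy : ∀ k < M, y k ∈ Ioo (a k) (a (k+1))) :
    |(∑ k ∈ Finset.range M, ∫ x in Ioc (a k) (a (k+1)), (x - y k)^2 * f x)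
      - ∑ k ∈ Finset.range M, ∫ x in Ioc (a k) (a (k+1)), (x - y k)^2 * g x|
    ≤ M * ∫ x in Ioo (0:ℝ) 1, |f x - g x| := by
  rw [← Finset.sum_sub_distrib]
  refine le_trans (Finset.abs_sum_le_sum_abs _ _) ?_
  have hT : ∀ k ∈ Finset.range M,
      |(∫ x in Ioc (a k) (a (k+1)), (x - y k)^2 * f x)
        - ∫ x in Ioc (a k) (a (k+1)), (x - y k)^2 * g x|
      ≤ ∫ x in Ioo (0:ℝ) 1, |f x - g x| := by
    intro k hk
    rw [Finset.mem_range] at hk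
    have hα : 0 ≤ a k := ha0 ▸ chain_mono hmono 0 k (Nat.zero_le _) (le_of_lt hk)
    have hβ : a (k+1) ≤ 1 := haM ▸ chain_mono hmono (k+1) M (by omega) le_rfl
    have hyk := hy k hk
    have hy0 : 0 ≤ y k := le_trans hα (le_of_lt hyk.1)
    have hy1 : y k ≤ 1 := le_trans (le_of_lt hyk.2) hβ
    have hif := quant_integrable hf hα hβ hy0 hy1
    have hig := quant_integrable hg hα hβ hy0 hy1
    rw [← integral_sub hif hig]
    have heq : ∀ x, (x - y k)^2 * f x - (x - y k)^2 * g x = (x - y k)^2 * (f x - g x) := by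
      intro x; ring
    simp_rw [heq]
    have habs : |∫ x in Ioc (a k) (a (k+1)), (x - y k)^2 * (f x - g x)|
        ≤ ∫ x in Ioc (a k) (a (k+1)), |(x - y k)^2 * (f x - g x)| := by
      simpa only [Real.norm_eq_abs] using
        norm_integral_le_integral_norm (μ := volume.restrict (Ioc (a k) (a (k+1))))
          (f := fun x => (x - y k)^2 * (f x - g x))
    refine le_trans habs ?_
    have hsub : Ioo (a k) (a (k+1)) ⊆ Ioo (0:ℝ) 1 := fun x hx =>
      ⟨lt_of_le_of_lt hα hx.1, lt_of_lt_of_le hx.2 hβ⟩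
    have hfg : IntegrableOn (fun x => |f x - g x|) (Ioo (0:ℝ) 1) := (hf.sub hg).abs
    have hfgI : IntegrableOn (fun x => |f x - g x|) (Ioc (a k) (a (k+1))) := by
      rw [integrableOn_Ioc_iff_integrableOn_Ioo]
      exact hfg.mono_set hsub
    have step1 : ∫ x in Ioc (a k) (a (k+1)), |(x - y k)^2 * (f x - g x)|
        ≤ ∫ x in Ioc (a k) (a (k+1)), |f x - g x| := by
      apply integral_mono_ae
      · exact ((hif.sub hig).abs).congr (Filter.Eventually.of_forall fun x => by
          simp only [Pi.sub_apply, heq])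
      · exact hfgI
      · refine (ae_restrict_iff' measurableSet_Ioc).mpr ?_
        have h1 : (volume : Measure ℝ) {(1:ℝ)} = 0 := Real.volume_singleton
        filter_upwards [measure_eq_zero_iff_ae_notMem.mp h1] with x hx1 hx
        have hb : |x - y k| ≤ 1 := by
          rw [abs_le]
          have hx0 : 0 < x := lt_of_le_of_lt hα hx.1
          have hx1' : x ≤ 1 := le_trans hx.2 hβ
          constructor <;> nlinarith
        rw [abs_mul, abs_pow, sq_abs]
        calc (x - y k)^2 * |f x - g x| ≤ 1 * |f x - g x| := by
              apply mul_le_mul_of_nonneg_right _ (abs_nonneg _)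
              nlinarith [abs_nonneg (x - y k), sq_abs (x - y k)]
          _ = |f x - g x| := one_mul _
    refine le_trans step1 ?_
    apply setIntegral_mono_set hfg
    · filter_upwards with x using abs_nonneg _
    · rw [MeasureTheory.ae_le_set]
      have : Ioc (a k) (a (k+1)) \ Ioo (0:ℝ) 1 ⊆ {1} := by
        intro x ⟨hx, hnx⟩
        have hx0 : 0 < x := lt_of_le_of_lt hα hx.1
        have hx1' : x ≤ 1 := le_trans hx.2 hβ
        by_contra hne
        exact hnx ⟨hx0, lt_of_le_of_ne hx1' (by simpa using hne)⟩
      exact measure_mono_null this Real.volume_singleton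
  calc ∑ k ∈ Finset.range M, |(∫ x in Ioc (a k) (a (k+1)), (x - y k)^2 * f x)
        - ∫ x in Ioc (a k) (a (k+1)), (x - y k)^2 * g x|
      ≤ ∑ _k ∈ Finset.range M, ∫ x in Ioo (0:ℝ) 1, |f x - g x| := Finset.sum_le_sum hT
    _ = M * ∫ x in Ioo (0:ℝ) 1, |f x - g x| := by
        rw [Finset.sum_const, Finset.card_range, nsmul_eq_mul]

/-- The minimal distortion is continuous in the others' strategies: if the
source density `p θ` on (0,1) is positive, log-concave, a probability density, and depends
continuously on the parameter `θ` in total variation, then the minimum over `M`-level regular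
quantizers of the expected squared distortion is a continuous function of `θ`. -/
theorem min_distortion_continuous
    (Θ : Type*) [MetricSpace Θ] (M : ℕ) (hM : 0 < M)
    (p : Θ → ℝ → ℝ)
    (hpos : ∀ θ, ∀ x ∈ Ioo (0:ℝ) 1, 0 < p θ x)
    (hlc : ∀ θ, ConcaveOn ℝ (Ioo (0:ℝ) 1) (fun x => Real.log (p θ x)))
    (hint : ∀ θ, IntegrableOn (p θ) (Ioo (0:ℝ) 1))
    (hnorm : ∀ θ, ∫ x in Ioo (0:ℝ) 1, p θ x = 1)
    (htv : ∀ θ₀ : Θ,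
      Tendsto (fun θ => ∫ x in Ioo (0:ℝ) 1, |p θ x - p θ₀ x|) (nhds θ₀) (nhds 0)) :
    Continuous (fun θ : Θ =>
      sInf {d : ℝ | ∃ a y : ℕ → ℝ,
        a 0 = 0 ∧ a M = 1 ∧ (∀ k < M, a k < a (k + 1)) ∧
        (∀ k < M, y k ∈ Ioo (a k) (a (k + 1))) ∧
        d = ∑ k ∈ Finset.range M,
          ∫ x in Ioc (a k) (a (k + 1)), (x - y k) ^ 2 * p θ x}) := by
  set S : Θ → Set ℝ := fun θ => {d : ℝ | ∃ a y : ℕ → ℝ,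
        a 0 = 0 ∧ a M = 1 ∧ (∀ k < M, a k < a (k + 1)) ∧
        (∀ k < M, y k ∈ Ioo (a k) (a (k + 1))) ∧
        d = ∑ k ∈ Finset.range M,
          ∫ x in Ioc (a k) (a (k + 1)), (x - y k) ^ 2 * p θ x} with hS
  have hM' : (0:ℝ) < M := by exact_mod_cast hM
  -- nonemptiness via the uniform quantizer
  have hSne : ∀ θ, (S θ).Nonempty := by
    intro θ
    refine ⟨_, (fun k => (k:ℝ)/M), (fun k => (2*k+1)/(2*M)), by simp, ?_, ?_, ?_, rfl⟩
    · exact div_self (ne_of_gt hM')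
    · intro k _
      rw [div_lt_div_iff₀ hM' hM']
      push_cast; nlinarith
    · intro k _
      constructor
      · rw [div_lt_div_iff₀ hM' (by linarith)]
        push_cast; nlinarith
      · rw [div_lt_div_iff₀ (by linarith) hM']
        push_cast; nlinarith
  -- lower bound 0
  have hSlb : ∀ θ, ∀ d ∈ S θ, (0:ℝ) ≤ d := by
    intro θ d hd
    obtain ⟨a, y, h0, h1, h2, _, rfl⟩ := hd
    apply Finset.sum_nonneg
    intro k hk
    rw [Finset.mem_range] at hk
    have hα : 0 ≤ a k := h0 ▸ chain_mono h2 0 k (Nat.zero_le _) (le_of_lt hk)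
    have hβ : a (k+1) ≤ 1 := h1 ▸ chain_mono h2 (k+1) M (by omega) le_rfl
    apply setIntegral_nonneg_ae measurableSet_Ioc
    filter_upwards [measure_eq_zero_iff_ae_notMem.mp (Real.volume_singleton (a := (1:ℝ)))]
      with x hx1 hx
    have hx0 : 0 < x := lt_of_le_of_lt hα hx.1
    have hxlt : x < 1 := lt_of_le_of_ne (le_trans hx.2 hβ) (by simpa using hx1)
    exact mul_nonneg (sq_nonneg _) (le_of_lt (hpos θ x ⟨hx0, hxlt⟩))
  have hbdd : ∀ θ, BddBelow (S θ) := fun θ => ⟨0, fun d hd => hSlb θ d hd⟩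
  -- one-sided comparison
  have hle : ∀ θ₁ θ₂ : Θ, sInf (S θ₁) ≤ sInf (S θ₂)
      + M * ∫ x in Ioo (0:ℝ) 1, |p θ₁ x - p θ₂ x| := by
    intro θ₁ θ₂
    rw [← sub_le_iff_le_add]
    apply le_csInf (hSne θ₂)
    intro b hb
    obtain ⟨a, y, h0, h1, h2, h3, rfl⟩ := hb
    have hb1 : (∑ k ∈ Finset.range M,
        ∫ x in Ioc (a k) (a (k + 1)), (x - y k) ^ 2 * p θ₁ x) ∈ S θ₁ :=
      ⟨a, y, h0, h1, h2, h3, rfl⟩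
    have hinf := csInf_le (hbdd θ₁) hb1
    have hk := key_bound (hint θ₁) (hint θ₂) h0 h1 h2 h3
    rw [abs_sub_le_iff] at hk
    linarith [hk.1]
  rw [continuous_iff_continuousAt]
  intro θ₀
  rw [ContinuousAt, tendsto_iff_dist_tendsto_zero]
  apply squeeze_zero (fun θ => dist_nonneg)
    (g := fun θ => M * ∫ x in Ioo (0:ℝ) 1, |p θ x - p θ₀ x|)
  · intro θ
    rw [Real.dist_eq, abs_sub_le_iff]
    constructor
    · linarith [hle θ θ₀]
    · have := hle θ₀ θ
      simp_rw [abs_sub_comm (p θ₀ _)] at this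
      linarith
  · have := (htv θ₀).const_mul (M:ℝ)
    simpa using this
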